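/- Let {H_n} be a Positive Linear Recurrence Sequence with length L and size S. For n > 2L, 0 ≤ t < S, and every ω ∈ Ω_n with Z_n(ω) = t, the number of summands satisfies K_n(ω) = K_{n−ℓ(t)}(h_t(ω)) + t, where h_t(ω) ∈ Ω_{n−ℓ(t)} is the legal decomposition obtained by removing the second-to-last block of ω. -/

import Mathlib

open scoped BigOperators
open Filter

/-- A Positive Linear Recurrence Sequence (PLRS): a sequence `H` of positive integers
satisfying `H (n+1) = c 1 * H n + ⋯ + c L * H (n+1-L)` for `n ≥ L`, with
`H 1 = 1` and initial conditions `H (n+1) = c 1 * H n + ⋯ + c n * H 1 + 1` for `1 ≤ n < L`. -/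
structure PLRS where
  /-- the length of the recurrence -/
  L : ℕ
  /-- the coefficients of the recurrence (indexed from 1) -/
  c : ℕ → ℕ
  /-- the sequence itself (indexed from 1) -/
  H : ℕ → ℕ
  L_pos : 0 < L
  c1_pos : 0 < c 1
  cL_pos : 0 < c L
  H_pos : ∀ n, 1 ≤ n → 0 < H n
  H_one : H 1 = 1
  H_rec : ∀ n, L ≤ n → H (n + 1) = ∑ i ∈ Finset.Icc 1 L, c i * H (n + 1 - i)
  H_init : ∀ n, 1 ≤ n → n < L → H (n + 1) = (∑ i ∈ Finset.Icc 1 n, c i * H (n + 1 - i)) + 1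

namespace PLRS

/-- The size `S = c 1 + ⋯ + c L` of a PLRS. -/
def size (P : PLRS) : ℕ := ∑ i ∈ Finset.Icc 1 P.L, P.c i

/-- Legality of a coefficient sequence `(a_1, …, a_m)` (as a list), not including the
requirement `a_1 > 0`: either (Condition 1) `m < L` and `a_i = c_i` for all `i`, or
(Condition 2) there is `s ∈ {1, …, L}` with `a_1 = c_1, …, a_{s-1} = c_{s-1}`, `a_s < c_s`,
and `(a_{s+1}, …, a_m)` legal (possibly empty). -/
inductive IsLegal (P : PLRS) : List ℕ → Prop
  | cond1 (m : ℕ) (h1 : 1 ≤ m) (h2 : m < P.L) :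
      IsLegal P ((List.range m).map fun i => P.c (i + 1))
  | cond2 (s : ℕ) (hs1 : 1 ≤ s) (hs2 : s ≤ P.L) (a : ℕ) (ha : a < P.c s)
      (rest : List ℕ) (hrest : IsLegal P rest) :
      IsLegal P (((List.range (s - 1)).map fun i => P.c (i + 1)) ++ a :: rest)
  | cond2_last (s : ℕ) (hs1 : 1 ≤ s) (hs2 : s ≤ P.L) (a : ℕ) (ha : a < P.c s) :
      IsLegal P (((List.range (s - 1)).map fun i => P.c (i + 1)) ++ [a])

/-- A legal decomposition: a legal coefficient sequence with `a_1 > 0`. -/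
def LegalDecomp (P : PLRS) (l : List ℕ) : Prop := P.IsLegal l ∧ 0 < l.headI

/-- The value `∑_{i=1}^m a_i H_{m+1-i}` of a coefficient sequence `(a_1, …, a_m)`. -/
def value (P : PLRS) (l : List ℕ) : ℕ :=
  ∑ i ∈ Finset.range l.length, l.getD i 0 * P.H (l.length - i)

/-- `Ω_n`: the set of legal decompositions of integers in `[H_n, H_{n+1})`. -/
def Omega (P : PLRS) (n : ℕ) : Set (List ℕ) :=
  {l | P.LegalDecomp l ∧ P.H n ≤ P.value l ∧ P.value l < P.H (n + 1)}

/-- Expectation of `g` under the uniform probability measure on a (finite) set `A`. -/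
noncomputable def expectOn (A : Set (List ℕ)) (g : List ℕ → ℝ) : ℝ :=
  (∑ᶠ l ∈ A, g l) / (A.ncard : ℝ)

/-- Variance of `g` under the uniform probability measure on a (finite) set `A`. -/
noncomputable def varOn (A : Set (List ℕ)) (g : List ℕ → ℝ) : ℝ :=
  expectOn A (fun l => g l ^ 2) - (expectOn A g) ^ 2

/-- Expectation of `g` under the uniform probability measure on `Ω_n`. -/
noncomputable def expect (P : PLRS) (n : ℕ) (g : List ℕ → ℝ) : ℝ := expectOn (P.Omega n) g

/-- Probability of the event `A` under the uniform probability measure on `Ω_n`. -/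
noncomputable def prob (P : PLRS) (n : ℕ) (A : Set (List ℕ)) : ℝ :=
  ((P.Omega n ∩ A).ncard : ℝ) / ((P.Omega n).ncard : ℝ)

/-- `E[K_n]`, the expected number of summands on `Ω_n`. -/
noncomputable def expectK (P : PLRS) (n : ℕ) : ℝ := P.expect n fun l => (l.sum : ℝ)

/-- `Var[K_n]`, the variance of the number of summands on `Ω_n`. -/
noncomputable def varK (P : PLRS) (n : ℕ) : ℝ := varOn (P.Omega n) fun l => (l.sum : ℝ)

/-- The first index (0-based) at which the coefficient list disagrees with `c`. -/
def firstMismatch (P : PLRS) (l : List ℕ) : Option ℕ :=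
  (List.range l.length).find? fun i => l.getD i 0 != P.c (i + 1)

/-- The block decomposition of a legal coefficient sequence: repeatedly split off the
Type 2 block `(c_1, …, c_{s-1}, a_s)` with `a_s ≠ c_s`; if the whole remaining sequence
agrees with `c` it is a single (Type 1) block. -/
def blocks (P : PLRS) (l : List ℕ) : List (List ℕ) :=
  if h : l = [] then []
  else
    match P.firstMismatch l with
    | none => [l]
    | some i => l.take (i + 1) :: P.blocks (l.drop (i + 1))
termination_by l.length
decreasing_by
  have hl : 0 < l.length := List.length_pos_iff.mpr h
  simp only [List.length_drop]
  omega

/-- The second-to-last block of a legal decomposition. -/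
def stlBlock (P : PLRS) (l : List ℕ) : List ℕ := ((P.blocks l).reverse).getD 1 []

/-- `Z_n(ω)`: the size (sum of coefficients) of the second-to-last block. -/
def Z (P : PLRS) (l : List ℕ) : ℕ := (P.stlBlock l).sum

/-- The length function `ℓ(t)`: the length of the Type 2 block of size `t`, i.e., the least
`s` with `t < c_1 + ⋯ + c_s`. -/
noncomputable def ell (P : PLRS) (t : ℕ) : ℕ :=
  sInf {s : ℕ | t < ∑ i ∈ Finset.Icc 1 s, P.c i}

/-- `L_n(ω) = ℓ(Z_n(ω))`: the length of the second-to-last block. -/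
noncomputable def Lfn (P : PLRS) (l : List ℕ) : ℕ := P.ell (P.Z l)

/-- `h_t`: remove the second-to-last block of a legal decomposition. -/
def removeSTL (P : PLRS) (l : List ℕ) : List ℕ :=
  ((((P.blocks l).reverse).eraseIdx 1).reverse).flatten

/-- The Type 2 block of size `t`: `(c_1, …, c_{ℓ(t)-1}, t - (c_1 + ⋯ + c_{ℓ(t)-1}))`. -/
noncomputable def type2Block (P : PLRS) (t : ℕ) : List ℕ :=
  ((List.range (P.ell t - 1)).map fun i => P.c (i + 1)) ++
    [t - ∑ i ∈ Finset.Icc 1 (P.ell t - 1), P.c i]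

/-- Insert the Type 2 block of size `t` immediately before the last block. -/
noncomputable def insertSTL (P : PLRS) (t : ℕ) (l : List ℕ) : List ℕ :=
  ((((P.blocks l).reverse).insertIdx 1 (P.type2Block t)).reverse).flatten

/-- A Type 1 block: `(c_1, …, c_m)` with `1 ≤ m < L`. -/
def IsType1Block (P : PLRS) (bl : List ℕ) : Prop :=
  ∃ m, 1 ≤ m ∧ m < P.L ∧ bl = (List.range m).map fun i => P.c (i + 1)

/-- A Type 2 block: `(c_1, …, c_{s-1}, a)` with `1 ≤ s ≤ L` and `a < c_s`. -/
def IsType2Block (P : PLRS) (bl : List ℕ) : Prop :=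
  ∃ s, 1 ≤ s ∧ s ≤ P.L ∧ ∃ a, a < P.c s ∧
    bl = ((List.range (s - 1)).map fun i => P.c (i + 1)) ++ [a]

/-- Conditional expectation of `g` on `Ω_n` given `Z_n = t`. -/
noncomputable def condExpect (P : PLRS) (n t : ℕ) (g : List ℕ → ℝ) : ℝ :=
  expectOn (P.Omega n ∩ {l | P.Z l = t}) g

end PLRS

namespace PLRS

variable (P : PLRS)

/-- abbreviation for the prefix list `(c 1, …, c k)`. -/
def pre (k : ℕ) : List ℕ := (List.range k).map fun i => P.c (i + 1)

lemma length_pre (k : ℕ) : (P.pre k).length = k := by simp [pre]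

lemma pre_ne_nil {k : ℕ} (hk : 1 ≤ k) : P.pre k ≠ [] := by
  intro h
  have := P.length_pre k
  rw [h] at this
  simp at this
  omega

lemma getD_pre {k i : ℕ} (h : i < k) : (P.pre k).getD i 0 = P.c (i + 1) := by
  rw [List.getD_eq_getElem?_getD]
  simp [pre, List.getElem?_map, List.getElem?_range h]

lemma value_nil : P.value [] = 0 := by simp [value]

lemma value_cons (x : ℕ) (xs : List ℕ) :
    P.value (x :: xs) = x * P.H (xs.length + 1) + P.value xs := by
  unfold value
  simp only [List.length_cons]
  rw [Finset.sum_range_succ']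
  simp only [List.getD_cons_succ, List.getD_cons_zero]
  rw [add_comm]
  congr 1
  exact Finset.sum_congr rfl fun i _ => by rw [Nat.succ_sub_succ]

lemma value_append (l1 l2 : List ℕ) :
    P.value (l1 ++ l2) =
      (∑ i ∈ Finset.range l1.length, l1.getD i 0 * P.H (l1.length + l2.length - i))
        + P.value l2 := by
  induction l1 with
  | nil => simp
  | cons x xs ih =>
    rw [List.cons_append, value_cons, ih]
    simp only [List.length_append, List.length_cons]
    rw [Finset.sum_range_succ']
    simp only [List.getD_cons_succ, List.getD_cons_zero]
    have e1 : ∀ i ∈ Finset.range xs.length,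
        xs.getD i 0 * P.H (xs.length + 1 + l2.length - (i + 1))
          = xs.getD i 0 * P.H (xs.length + l2.length - i) := by
      intro i _
      congr 2
      omega
    rw [Finset.sum_congr rfl e1]
    have e2 : xs.length + 1 + l2.length - 0 = xs.length + l2.length + 1 := by omega
    rw [e2]
    ring

lemma sum_pre_H (k m : ℕ) :
    ∑ i ∈ Finset.range k, (P.pre k).getD i 0 * P.H (m - i)
      = ∑ i ∈ Finset.Icc 1 k, P.c i * P.H (m + 1 - i) := by
  rw [← Finset.Ico_add_one_right_eq_Icc, Finset.sum_Ico_eq_sum_range]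
  have e0 : k + 1 - 1 = k := by omega
  rw [e0]
  refine Finset.sum_congr rfl fun i hi => ?_
  rw [Finset.mem_range] at hi
  rw [P.getD_pre hi]
  congr 2
  · omega
  · omega

lemma sum_c_H_le {m s : ℕ} (hs1 : 1 ≤ s) (hsL : s ≤ P.L) (hsm : s ≤ m) :
    ∑ i ∈ Finset.Icc 1 s, P.c i * P.H (m + 1 - i) ≤ P.H (m + 1) := by
  rcases lt_or_ge m P.L with h | h
  · calc ∑ i ∈ Finset.Icc 1 s, P.c i * P.H (m + 1 - i)
        ≤ ∑ i ∈ Finset.Icc 1 m, P.c i * P.H (m + 1 - i) :=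
          Finset.sum_le_sum_of_subset (Finset.Icc_subset_Icc le_rfl hsm)
      _ ≤ P.H (m + 1) := by
          rw [P.H_init m (le_trans hs1 hsm) h]; omega
  · rw [P.H_rec m h]
    exact Finset.sum_le_sum_of_subset (Finset.Icc_subset_Icc le_rfl hsL)

lemma H_le_succ {k : ℕ} (hk : 1 ≤ k) : P.H k ≤ P.H (k + 1) := by
  have key : ∀ s, 1 ≤ s → s ≤ k →
      P.c 1 * P.H k ≤ ∑ i ∈ Finset.Icc 1 s, P.c i * P.H (k + 1 - i) := by
    intro s hs1 hsk
    have h1 : (1 : ℕ) ∈ Finset.Icc 1 s := by simp [hs1]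
    have := Finset.single_le_sum (f := fun i => P.c i * P.H (k + 1 - i))
      (fun i _ => Nat.zero_le _) h1
    simpa using this
  have hc1 : 1 ≤ P.c 1 := P.c1_pos
  have hH : P.H k ≤ P.c 1 * P.H k := Nat.le_mul_of_pos_left _ P.c1_pos
  rcases lt_or_ge k P.L with h | h
  · rw [P.H_init k hk h]
    have := key k hk le_rfl
    omega
  · rw [P.H_rec k h]
    have := key P.L P.L_pos h
    omega

lemma H_mono {a b : ℕ} (ha : 1 ≤ a) (hab : a ≤ b) : P.H a ≤ P.H b := by
  induction b with
  | zero => omega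
  | succ n ih =>
    rcases Nat.lt_or_ge a (n + 1) with h | h
    · have h1 : a ≤ n := by omega
      exact le_trans (ih h1) (P.H_le_succ (by omega))
    · have : a = n + 1 := by omega
      rw [this]

lemma isLegal_ne_nil {l : List ℕ} (h : P.IsLegal l) : l ≠ [] := by
  induction h with
  | cond1 m h1 h2 =>
    exact P.pre_ne_nil h1
  | cond2 s hs1 hs2 a ha rest hrest ih => simp
  | cond2_last s hs1 hs2 a ha => simp

lemma value_block_bound {s a : ℕ} (rest : List ℕ) (hs1 : 1 ≤ s) (hsL : s ≤ P.L)
    (ha : a < P.c s) (hrest : P.value rest + 1 ≤ P.H (rest.length + 1)) :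
    P.value (P.pre (s - 1) ++ a :: rest) < P.H (s + rest.length + 1) := by
  rw [value_append, value_cons]
  rw [P.length_pre]
  have h1 : ∀ i ∈ Finset.range (s - 1),
      (P.pre (s-1)).getD i 0 * P.H (s - 1 + (a :: rest).length - i)
        = (P.pre (s-1)).getD i 0 * P.H (s + rest.length - i) := by
    intro i hi
    congr 2
    simp only [List.length_cons]
    omega
  rw [Finset.sum_congr rfl h1, P.sum_pre_H (s-1) (s + rest.length)]
  have h2 : s + rest.length + 1 - s = rest.length + 1 := by omega
  have key : ∑ i ∈ Finset.Icc 1 (s-1), P.c i * P.H (s + rest.length + 1 - i)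
      + P.c s * P.H (rest.length + 1) ≤ P.H (s + rest.length + 1) := by
    have h3 : ∑ i ∈ Finset.Icc 1 s, P.c i * P.H (s + rest.length + 1 - i)
        = ∑ i ∈ Finset.Icc 1 (s-1), P.c i * P.H (s + rest.length + 1 - i)
          + P.c s * P.H (s + rest.length + 1 - s) := by
      have hs : s = (s - 1) + 1 := by omega
      rw [hs, Finset.sum_Icc_succ_top (by omega)]
      rw [← hs]
    rw [← h2, ← h3]
    exact P.sum_c_H_le hs1 hsL (by omega)
  have ha1 : a + 1 ≤ P.c s := ha
  nlinarith [Nat.zero_le (P.H (rest.length + 1))]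

lemma value_lt {l : List ℕ} (h : P.IsLegal l) : P.value l < P.H (l.length + 1) := by
  induction h with
  | cond1 m h1 h2 =>
    show P.value (P.pre m) < P.H ((P.pre m).length + 1)
    rw [P.length_pre]
    have : P.value (P.pre m) = ∑ i ∈ Finset.Icc 1 m, P.c i * P.H (m + 1 - i) := by
      unfold value
      rw [P.length_pre, ← P.sum_pre_H m m]
    rw [this, P.H_init m h1 h2]
    omega
  | cond2 s hs1 hs2 a ha rest hrest ih =>
    have hlen : ((List.range (s-1)).map (fun i => P.c (i + 1)) ++ a :: rest).length
        = s + rest.length := by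
      simp; omega
    rw [hlen]
    exact P.value_block_bound rest hs1 hs2 ha ih
  | cond2_last s hs1 hs2 a ha =>
    have hlen : ((List.range (s-1)).map (fun i => P.c (i + 1)) ++ [a]).length
        = s + ([] : List ℕ).length := by
      simp; omega
    rw [hlen]
    exact P.value_block_bound [] hs1 hs2 ha (by simp [P.value_nil, P.H_one])

lemma headI_value {l : List ℕ} (hne : l ≠ []) (hh : 0 < l.headI) :
    P.H l.length ≤ P.value l := by
  obtain ⟨x, xs, rfl⟩ := List.exists_cons_of_ne_nil hne
  rw [value_cons]
  simp only [List.headI] at hh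
  have : P.H (xs.length + 1) ≤ x * P.H (xs.length + 1) := Nat.le_mul_of_pos_left _ hh
  simp only [List.length_cons]
  omega

lemma length_eq_of_omega {l : List ℕ} {n : ℕ} (hn : 1 ≤ n) (hl : l ∈ P.Omega n) :
    l.length = n := by
  obtain ⟨⟨hleg, hh⟩, hlo, hhi⟩ := hl
  have hne := P.isLegal_ne_nil hleg
  have hlen1 : 1 ≤ l.length := List.length_pos_iff.mpr hne
  have h1 := P.value_lt hleg
  have h2 := P.headI_value hne hh
  by_contra hc
  rcases Nat.lt_or_ge l.length n with h | h
  · have : P.H (l.length + 1) ≤ P.H n := P.H_mono (by omega) (by omega)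
    omega
  · have hlt : n < l.length := by omega
    have : P.H (n + 1) ≤ P.H l.length := P.H_mono (by omega) (by omega)
    omega

end PLRS


namespace PLRS

variable (P : PLRS)

lemma blocks_eq_none {l : List ℕ} (h : l ≠ []) (hm : P.firstMismatch l = none) :
    P.blocks l = [l] := by
  rw [PLRS.blocks]; simp [h, hm]

lemma blocks_eq_some {l : List ℕ} {i : ℕ} (h : l ≠ [])
    (hm : P.firstMismatch l = some i) :
    P.blocks l = l.take (i+1) :: P.blocks (l.drop (i+1)) := by
  rw [PLRS.blocks]; simp [h, hm]

lemma blocks_nil : P.blocks [] = [] := by rw [PLRS.blocks]; simp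

lemma find?_range_eq_some {p : ℕ → Bool} {n j : ℕ} (hj : j < n)
    (hlt : ∀ i, i < j → p i = false) (hpj : p j = true) :
    (List.range n).find? p = some j := by
  have hn : n = j + ((n - j - 1) + 1) := by omega
  rw [hn, List.range_add, List.find?_append]
  have h1 : (List.range j).find? p = none := by
    rw [List.find?_eq_none]
    intro x hx
    rw [List.mem_range] at hx
    simp [hlt x hx]
  rw [h1, List.range_succ_eq_map]
  simp only [List.map_cons, List.find?_cons, Nat.add_zero, hpj]
  rfl

lemma getD_block_lt {s a : ℕ} (rest : List ℕ) {i : ℕ} (hi : i < s - 1) :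
    (P.pre (s-1) ++ a :: rest).getD i 0 = P.c (i+1) := by
  rw [List.getD_eq_getElem?_getD,
    List.getElem?_append_left (by rw [P.length_pre]; exact hi),
    ← List.getD_eq_getElem?_getD]
  exact P.getD_pre hi

lemma getD_block_eq {s a : ℕ} (rest : List ℕ) :
    (P.pre (s-1) ++ a :: rest).getD (s-1) 0 = a := by
  rw [List.getD_eq_getElem?_getD,
    List.getElem?_append_right (by rw [P.length_pre])]
  rw [P.length_pre]
  simp

lemma fm_block {s a : ℕ} (rest : List ℕ) (hs : 1 ≤ s) (ha : a ≠ P.c s) :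
    P.firstMismatch (P.pre (s-1) ++ a :: rest) = some (s - 1) := by
  unfold firstMismatch
  apply find?_range_eq_some
  · simp [P.length_pre]
  · intro i hi
    rw [P.getD_block_lt rest hi]
    simp
  · rw [P.getD_block_eq rest]
    have : s - 1 + 1 = s := by omega
    rw [this]
    simpa using ha

lemma fm_pre_none (m : ℕ) : P.firstMismatch (P.pre m) = none := by
  unfold firstMismatch
  rw [List.find?_eq_none]
  intro i hi
  rw [List.mem_range, P.length_pre] at hi
  rw [P.getD_pre hi]
  simp

lemma blocks_cons_block {s a : ℕ} (rest : List ℕ) (hs : 1 ≤ s) (ha : a ≠ P.c s) :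
    P.blocks (P.pre (s-1) ++ a :: rest) = (P.pre (s-1) ++ [a]) :: P.blocks rest := by
  have hne : P.pre (s-1) ++ a :: rest ≠ [] := by simp
  rw [P.blocks_eq_some hne (P.fm_block rest hs ha)]
  have e1 : s - 1 + 1 - (P.pre (s-1)).length = 1 := by rw [P.length_pre]; omega
  have e2 : (P.pre (s-1)).length ≤ s - 1 + 1 := by rw [P.length_pre]; omega
  congr 1
  · rw [List.take_append, List.take_of_length_le e2, e1]
    rfl
  · congr 1
    rw [List.drop_append, List.drop_of_length_le e2, e1]
    rfl

lemma blocks_shape {l : List ℕ} (h : P.IsLegal l) :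
    ∃ bs B, P.blocks l = bs ++ [B] ∧ (∀ b ∈ bs, P.IsType2Block b) ∧
      (P.IsType1Block B ∨ P.IsType2Block B) ∧ (P.blocks l).flatten = l := by
  induction h with
  | cond1 m h1 h2 =>
    have hb : P.blocks (P.pre m) = [P.pre m] :=
      P.blocks_eq_none (P.pre_ne_nil h1) (P.fm_pre_none m)
    refine ⟨[], P.pre m, hb, by simp, Or.inl ⟨m, h1, h2, rfl⟩, ?_⟩
    show (P.blocks (P.pre m)).flatten = P.pre m
    rw [hb]
    simp
  | cond2 s hs1 hs2 a ha rest hrest ih =>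
    obtain ⟨bs, B, hbl, hbs2, hB, hflat⟩ := ih
    have hb := P.blocks_cons_block rest hs1 (Nat.ne_of_lt ha)
    refine ⟨(P.pre (s-1) ++ [a]) :: bs, B, ?_, ?_, hB, ?_⟩
    · show P.blocks (P.pre (s-1) ++ a :: rest) = _
      rw [hb, hbl]
      rfl
    · intro b hb'
      rcases List.mem_cons.mp hb' with h | h
      · exact h ▸ ⟨s, hs1, hs2, a, ha, rfl⟩
      · exact hbs2 b h
    · show (P.blocks (P.pre (s-1) ++ a :: rest)).flatten = P.pre (s-1) ++ a :: rest
      rw [hb, List.flatten_cons, hflat]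
      simp
  | cond2_last s hs1 hs2 a ha =>
    have hb : P.blocks (P.pre (s-1) ++ a :: ([] : List ℕ))
        = (P.pre (s-1) ++ [a]) :: P.blocks [] :=
      P.blocks_cons_block [] hs1 (Nat.ne_of_lt ha)
    rw [P.blocks_nil] at hb
    refine ⟨[], P.pre (s-1) ++ [a], ?_, by simp, Or.inr ⟨s, hs1, hs2, a, ha, rfl⟩, ?_⟩
    · exact hb
    · show (P.blocks (P.pre (s-1) ++ a :: ([] : List ℕ))).flatten = P.pre (s-1) ++ [a]
      rw [hb]
      simp

lemma isLegal_of_block {B : List ℕ} (h : P.IsType1Block B ∨ P.IsType2Block B) :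
    P.IsLegal B := by
  rcases h with ⟨m, h1, h2, rfl⟩ | ⟨s, hs1, hsL, a, ha, rfl⟩
  · exact IsLegal.cond1 m h1 h2
  · exact IsLegal.cond2_last s hs1 hsL a ha

lemma length_block_le {B : List ℕ} (h : P.IsType1Block B ∨ P.IsType2Block B) :
    B.length ≤ P.L := by
  rcases h with ⟨m, h1, h2, rfl⟩ | ⟨s, hs1, hsL, a, ha, rfl⟩
  · simp; omega
  · simp; omega

lemma type2_ne_nil {b : List ℕ} (h : P.IsType2Block b) : b ≠ [] := by
  obtain ⟨s, hs1, hsL, a, ha, rfl⟩ := h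
  simp

lemma sum_pre (k : ℕ) : (P.pre k).sum = ∑ i ∈ Finset.Icc 1 k, P.c i := by
  induction k with
  | zero => simp [pre]
  | succ n ih =>
    have : P.pre (n+1) = P.pre n ++ [P.c (n+1)] := by
      unfold pre
      rw [List.range_succ, List.map_append]
      rfl
    rw [this, List.sum_append, ih, Finset.sum_Icc_succ_top (by omega)]
    simp

lemma ell_sum_block {s a : ℕ} (hs1 : 1 ≤ s) (ha : a < P.c s) :
    P.ell ((∑ i ∈ Finset.Icc 1 (s-1), P.c i) + a) = s := by
  set t := (∑ i ∈ Finset.Icc 1 (s-1), P.c i) + a with ht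
  have hsum : ∑ i ∈ Finset.Icc 1 s, P.c i
      = ∑ i ∈ Finset.Icc 1 (s-1), P.c i + P.c s := by
    have hs : s = (s-1)+1 := by omega
    rw [hs, Finset.sum_Icc_succ_top (by omega), ← hs]
  have hmem : s ∈ {s' : ℕ | t < ∑ i ∈ Finset.Icc 1 s', P.c i} := by
    show t < ∑ i ∈ Finset.Icc 1 s, P.c i
    omega
  have h1 : P.ell t ≤ s := Nat.sInf_le hmem
  have h2 : t < ∑ i ∈ Finset.Icc 1 (P.ell t), P.c i := Nat.sInf_mem ⟨s, hmem⟩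
  by_contra hc
  have h3 : P.ell t ≤ s - 1 := by
    have : P.ell t ≠ s := fun h => hc (h ▸ rfl)
    omega
  have h4 : ∑ i ∈ Finset.Icc 1 (P.ell t), P.c i ≤ ∑ i ∈ Finset.Icc 1 (s-1), P.c i :=
    Finset.sum_le_sum_of_subset (Finset.Icc_subset_Icc le_rfl h3)
  omega

lemma legal_flatten_blocks (bs : List (List ℕ)) (B : List ℕ)
    (hbs : ∀ b ∈ bs, P.IsType2Block b) (hB : P.IsLegal B) :
    P.IsLegal (bs.flatten ++ B) := by
  induction bs with
  | nil => simpa using hB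
  | cons b bs ih =>
    obtain ⟨s, hs1, hsL, a, ha, rfl⟩ := hbs b (by simp)
    rw [List.flatten_cons]
    have e : (((List.range (s-1)).map fun i => P.c (i+1)) ++ [a]) ++ bs.flatten ++ B
        = ((List.range (s-1)).map fun i => P.c (i+1)) ++ a :: (bs.flatten ++ B) := by
      simp
    rw [e]
    exact IsLegal.cond2 s hs1 hsL a ha _ (ih fun b hb => hbs b (by simp [hb]))

lemma headI_append_of_ne_nil {l1 l2 : List ℕ} (h : l1 ≠ []) :
    (l1 ++ l2).headI = l1.headI := by
  cases l1 with
  | nil => exact absurd rfl h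
  | cons x xs => rfl

end PLRS


open PLRS

/-- For `n > 2L`, `0 ≤ t < S` and `ω ∈ Ω_n` with `Z_n ω = t`, we have
`h_t ω ∈ Ω_{n-ℓ(t)}` and `K_n ω = K_{n-ℓ(t)} (h_t ω) + t`. -/
theorem summands_removeSTL (P : PLRS) (n t : ℕ) (hn : 2 * P.L < n) (ht : t < P.size)
    (l : List ℕ) (hl : l ∈ P.Omega n) (hz : P.Z l = t) :
    P.removeSTL l ∈ P.Omega (n - P.ell t) ∧ l.sum = (P.removeSTL l).sum + t := by
  have hL1 : 1 ≤ P.L := P.L_pos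
  obtain ⟨⟨hleg, hh⟩, hlo, hhi⟩ := hl
  have hn1 : 1 ≤ n := by omega
  have hlen : l.length = n := P.length_eq_of_omega hn1 ⟨⟨hleg, hh⟩, hlo, hhi⟩
  obtain ⟨bs, B, hbl, hbs2, hB, hflat⟩ := P.blocks_shape hleg
  have hBlen : B.length ≤ P.L := P.length_block_le hB
  have hblen : ∀ b ∈ bs, b.length ≤ P.L := fun b hb => P.length_block_le (Or.inr (hbs2 b hb))
  -- bs has at least 2 elements
  have hbs_len : 2 ≤ bs.length := by
    by_contra hc
    push_neg at hc
    have h1 : l.length = ((bs ++ [B]).map List.length).sum := by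
      rw [← hflat, hbl, List.length_flatten]
    have h2 : ((bs ++ [B]).map List.length).sum ≤ (bs.length + 1) * P.L := by
      have h3 : ∀ x ∈ (bs ++ [B]).map List.length, x ≤ P.L := by
        intro x hx
        simp only [List.mem_map, List.mem_append] at hx
        obtain ⟨b, hb, rfl⟩ := hx
        rcases hb with hb | hb
        · exact hblen b hb
        · simp only [List.mem_singleton] at hb
          subst hb
          exact hBlen
      have := List.sum_le_card_nsmul ((bs ++ [B]).map List.length) P.L h3
      simpa [List.length_map, List.length_append, smul_eq_mul] using this
    have h4 : (bs.length + 1) * P.L ≤ 2 * P.L := Nat.mul_le_mul_right _ (by omega)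
    rw [hlen] at h1
    omega
  obtain ⟨bs', M, hbs'⟩ : ∃ bs' M, bs = bs' ++ [M] := by
    rcases List.eq_nil_or_concat bs with h | ⟨bs', M, h⟩
    · rw [h] at hbs_len; simp at hbs_len
    · exact ⟨bs', M, by rw [h, List.concat_eq_append]⟩
  have hbs'ne : bs' ≠ [] := by
    intro h
    rw [hbs', h] at hbs_len
    simp at hbs_len
  have hrev : (P.blocks l).reverse = B :: M :: bs'.reverse := by
    rw [hbl, hbs']
    simp
  have hM2 : P.IsType2Block M := hbs2 M (by rw [hbs']; simp)
  obtain ⟨s, hs1, hsL, a, ha, hMeq⟩ := hM2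
  have hstl : P.stlBlock l = M := by
    rw [stlBlock, hrev]
    rfl
  have hMsum : M.sum = ∑ i ∈ Finset.Icc 1 (s-1), P.c i + a := by
    rw [hMeq, List.sum_append]
    have h := P.sum_pre (s-1)
    unfold PLRS.pre at h
    rw [h]
    simp
  have ht' : t = M.sum := by
    rw [← hz]
    unfold PLRS.Z
    rw [hstl]
  have hell : P.ell t = s := by
    rw [ht', hMsum]
    exact P.ell_sum_block hs1 ha
  have hMlen : M.length = s := by
    rw [hMeq]
    simp
    omega
  -- compute removeSTL
  have hrem : P.removeSTL l = bs'.flatten ++ B := by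
    unfold PLRS.removeSTL
    rw [hrev]
    show ((B :: bs'.reverse).reverse).flatten = _
    rw [List.reverse_cons, List.reverse_reverse, List.flatten_append]
    simp
  -- decomposition of l
  have hl_eq : l = bs'.flatten ++ (M ++ B) := by
    rw [← hflat, hbl, hbs']
    rw [List.flatten_append, List.flatten_append]
    simp
  -- sums
  have hsum : l.sum = (P.removeSTL l).sum + t := by
    rw [hrem, hl_eq, ht']
    simp only [List.sum_append]
    omega
  -- lengths
  have hrlen : (P.removeSTL l).length = n - P.ell t := by
    rw [hrem, hell]
    have h1 : l.length = bs'.flatten.length + (M.length + B.length) := by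
      rw [hl_eq]
      simp [List.length_append]
    rw [List.length_append]
    omega
  have hsn : s < n := by omega
  -- legality
  have hlegr : P.IsLegal (P.removeSTL l) := by
    rw [hrem]
    exact P.legal_flatten_blocks bs' B
      (fun b hb => hbs2 b (by rw [hbs']; exact List.mem_append_left _ hb))
      (P.isLegal_of_block hB)
  -- headI
  have hfne : bs'.flatten ≠ [] := by
    obtain ⟨b0, bs'', rfl⟩ := List.exists_cons_of_ne_nil hbs'ne
    have hb0 : P.IsType2Block b0 := hbs2 b0 (by rw [hbs']; simp)
    have := P.type2_ne_nil hb0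
    rw [List.flatten_cons]
    intro hcon
    rw [List.append_eq_nil_iff] at hcon
    exact this hcon.1
  have hhr : 0 < (P.removeSTL l).headI := by
    rw [hrem, headI_append_of_ne_nil hfne]
    rw [hl_eq, headI_append_of_ne_nil hfne] at hh
    exact hh
  have hrne : P.removeSTL l ≠ [] := P.isLegal_ne_nil hlegr
  refine ⟨⟨⟨hlegr, hhr⟩, ?_, ?_⟩, hsum⟩
  · have := P.headI_value hrne hhr
    rwa [hrlen] at this
  · have := P.value_lt hlegr
    rwa [hrlen] at this
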